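/- arXiv:1801.06244 — 3 statements merged into one kernel-verified Lean document; each statement's English description precedes it below -/
import Mathlib

section
/- If F is holomorphic on the upper half-plane and satisfies F(-1/τ) = τ²·F(τ) for all τ in the upper half-plane, and F is 1-periodic with Fourier expansion F(τ) = Σ_{n∈ℤ} a_n e^{2πinτ}, then the constant term a_0 equals 0. -/
open Complex

private lemma wt2_aux_norm (b : ℂ) (n : ℤ) (τ : ℂ) :
    ‖b * Complex.exp (2 * Real.pi * Complex.I * n * τ)‖
      = ‖b‖ * Real.exp (-(2 * Real.pi * n * τ.im)) := by
  rw [norm_mul]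
  congr 1
  rw [Complex.norm_exp]
  congr 1
  have : (2 * (Real.pi:ℂ) * Complex.I * n * τ).re
      = -(2 * Real.pi * n * τ.im) := by
    simp [Complex.mul_re, Complex.mul_im]
  exact this

private lemma wt2_aux_deriv (k τ₀ : ℂ) :
    HasDerivAt (fun τ => Complex.exp (k * τ)) (k * Complex.exp (k * τ₀)) τ₀ := by
  simpa [mul_comm] using ((hasDerivAt_id τ₀).const_mul k).cexp

private lemma wt2_ne1 : (I:ℂ) + 1 ≠ 0 := by
  intro h; have := congrArg Complex.im h; simp at this

private lemma wt2_ne2 : ((-1+I)/2 : ℂ) + 1 ≠ 0 := by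
  intro h; have := congrArg Complex.im h; simp at this

private lemma wt2_ne3 : ((-1+I) : ℂ) + 1 ≠ 0 := by
  intro h; have := congrArg Complex.im h; simp at this

private lemma wt2_eq1 : (-1 : ℂ)/(I+1) = (-1+I)/2 := by
  rw [div_eq_div_iff wt2_ne1 (by norm_num)]
  ring_nf
  simp [Complex.I_sq]
  norm_num

private lemma wt2_eq2 : (-1 : ℂ)/((-1+I)/2+1) = -1+I := by
  rw [div_eq_iff wt2_ne2]
  ring_nf
  simp [Complex.I_sq]
  ring

private lemma wt2_eq3 : (-1 : ℂ)/((-1+I)+1) = I := by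
  rw [div_eq_iff wt2_ne3]
  ring_nf
  simp [Complex.I_sq]

private lemma wt2_eqI : (-1 : ℂ)/I = I := by
  rw [div_eq_iff Complex.I_ne_zero]
  simp [Complex.I_sq]

/-- The constant term of an (unrestricted) weight-2 modular form on `SL₂(ℤ)` vanishes:
if `F` is holomorphic on the upper half-plane, satisfies `F(-1/τ) = τ² F(τ)`, is
1-periodic, and has an absolutely convergent Fourier expansion `F(τ) = Σ_{n∈ℤ} aₙ e^{2πinτ}`,
then `a₀ = 0`. -/
theorem weight_two_constant_term_eq_zero
    (F : ℂ → ℂ) (a : ℤ → ℂ)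
    (hol : DifferentiableOn ℂ F {τ : ℂ | 0 < τ.im})
    (hmod : ∀ τ : ℂ, 0 < τ.im → F (-1 / τ) = τ ^ 2 * F τ)
    (hper : ∀ τ : ℂ, 0 < τ.im → F (τ + 1) = F τ)
    (hfour : ∀ τ : ℂ, 0 < τ.im →
      HasSum (fun n : ℤ => a n * Complex.exp (2 * Real.pi * Complex.I * n * τ)) (F τ)) :
    a 0 = 0 := by
  classical
  have hπ : (0:ℝ) < Real.pi := Real.pi_pos
  -- summability of norms at each height
  have key : ∀ y : ℝ, 0 < y →
      Summable (fun n : ℤ => ‖a n‖ * Real.exp (-(2 * Real.pi * n * y))) := by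
    intro y hy
    have h1 : (0:ℝ) < (Complex.I * (y:ℂ)).im := by simpa using hy
    have h2 := ((hfour (Complex.I * y) h1).summable).norm
    have h3 : ∀ n : ℤ, ‖a n * Complex.exp (2 * Real.pi * Complex.I * n * (Complex.I * y))‖
        = ‖a n‖ * Real.exp (-(2 * Real.pi * n * y)) := by
      intro n
      rw [wt2_aux_norm]
      norm_num
    exact h2.congr h3
  set c : ℤ → ℂ := fun n => if n = 0 then 0 else a n / (2 * Real.pi * Complex.I * n) with hcdef
  set d : ℤ → ℂ := fun n => if n = 0 then 0 else a n with hddef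
  have hc_norm : ∀ n : ℤ, ‖c n‖ ≤ ‖a n‖ := by
    intro n
    by_cases hn : n = 0
    · simp [hcdef, hn]
    · simp only [hcdef, hn, if_false]
      rw [norm_div]
      apply div_le_self (norm_nonneg _)
      have h1 : ‖(2 * (Real.pi:ℂ) * Complex.I * (n:ℂ))‖ = 2 * Real.pi * |(n:ℝ)| := by
        simp [norm_mul, Complex.norm_real, abs_of_pos Real.pi_pos]
      rw [h1]
      have h2 : (1:ℝ) ≤ |(n:ℝ)| := by
        rw [← Int.cast_abs]
        exact_mod_cast Int.one_le_abs hn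
      nlinarith [Real.pi_gt_three]
  have hd_norm : ∀ n : ℤ, ‖d n‖ ≤ ‖a n‖ := by
    intro n
    by_cases hn : n = 0 <;> simp [hddef, hn]
  -- the primitive
  set G : ℂ → ℂ := fun τ =>
    a 0 * τ + ∑' n : ℤ, c n * Complex.exp (2 * Real.pi * Complex.I * n * τ) with hGdef
  -- derivative of G
  have hGderiv : ∀ τ : ℂ, 0 < τ.im → HasDerivAt G (F τ) τ := by
    intro τ hτ
    set y := τ.im with hy
    set t : Set ℂ := {z : ℂ | y / 2 < z.im} ∩ {z : ℂ | z.im < 2 * y} with htdef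
    have ht_open : IsOpen t :=
      (isOpen_lt continuous_const Complex.continuous_im).inter
        (isOpen_lt Complex.continuous_im continuous_const)
    have ht_conn : IsPreconnected t :=
      ((convex_halfSpace_im_gt (y / 2)).inter (convex_halfSpace_im_lt (2 * y))).isPreconnected
    have hτt : τ ∈ t := by
      constructor <;> simp [htdef] <;> linarith
    set u : ℤ → ℝ := fun n =>
      ‖a n‖ * (Real.exp (-(2 * Real.pi * n * (y / 2))) + Real.exp (-(2 * Real.pi * n * (2 * y))))
      with hudef
    have hu : Summable u := by
      have := (key (y / 2) (by linarith)).add (key (2 * y) (by linarith))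
      simpa [hudef, mul_add] using this
    have hg : ∀ (n : ℤ) (z : ℂ), z ∈ t →
        HasDerivAt (fun z => c n * Complex.exp (2 * Real.pi * Complex.I * n * z))
          (d n * Complex.exp (2 * Real.pi * Complex.I * n * z)) z := by
      intro n z _
      have h := (wt2_aux_deriv (2 * Real.pi * Complex.I * n) z).const_mul (c n)
      refine h.congr_deriv ?_
      rw [← mul_assoc]
      congr 1
      by_cases hn : n = 0
      · simp [hcdef, hddef, hn]
      · have hne : (2 * (Real.pi:ℂ) * Complex.I * (n:ℂ)) ≠ 0 := by
          refine mul_ne_zero (mul_ne_zero (mul_ne_zero two_ne_zero ?_) Complex.I_ne_zero) ?_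
          · exact_mod_cast Real.pi_ne_zero
          · exact_mod_cast hn
        simp only [hcdef, hddef, hn, if_false]
        exact div_mul_cancel₀ _ hne
    have hg' : ∀ (n : ℤ) (z : ℂ), z ∈ t →
        ‖d n * Complex.exp (2 * Real.pi * Complex.I * n * z)‖ ≤ u n := by
      intro n z hz
      rw [wt2_aux_norm]
      have hb : Real.exp (-(2 * Real.pi * n * z.im)) ≤
          Real.exp (-(2 * Real.pi * n * (y / 2))) + Real.exp (-(2 * Real.pi * n * (2 * y))) := by
        rcases le_or_gt 0 (n:ℝ) with hn | hn
        · have h2pn : (0:ℝ) ≤ 2 * Real.pi * n := by positivity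
          have hmul := mul_le_mul_of_nonneg_left hz.1.le h2pn
          have : Real.exp (-(2 * Real.pi * n * z.im))
              ≤ Real.exp (-(2 * Real.pi * n * (y / 2))) := by
            apply Real.exp_le_exp.mpr
            linarith
          linarith [Real.exp_pos (-(2 * Real.pi * n * (2 * y)))]
        · have h2pn : 2 * Real.pi * (n:ℝ) ≤ 0 := by nlinarith
          have hmul := mul_le_mul_of_nonpos_left hz.2.le h2pn
          have : Real.exp (-(2 * Real.pi * n * z.im))
              ≤ Real.exp (-(2 * Real.pi * n * (2 * y))) := by
            apply Real.exp_le_exp.mpr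
            linarith
          linarith [Real.exp_pos (-(2 * Real.pi * n * (y / 2)))]
      calc ‖d n‖ * Real.exp (-(2 * Real.pi * n * z.im))
          ≤ ‖a n‖ * (Real.exp (-(2 * Real.pi * n * (y / 2)))
              + Real.exp (-(2 * Real.pi * n * (2 * y)))) := by
            apply mul_le_mul (hd_norm n) hb (Real.exp_pos _).le (norm_nonneg _)
        _ = u n := rfl
    have hg0 : Summable (fun n : ℤ => c n * Complex.exp (2 * Real.pi * Complex.I * n * τ)) := by
      apply Summable.of_norm_bounded (key y hτ)
      intro n
      rw [wt2_aux_norm]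
      exact mul_le_mul_of_nonneg_right (hc_norm n) (Real.exp_pos _).le
    have hmain := hasDerivAt_tsum_of_isPreconnected hu ht_open ht_conn hg hg' hτt hg0 hτt
    -- identify the sum of derivatives
    have hsum : HasSum (fun n : ℤ => d n * Complex.exp (2 * Real.pi * Complex.I * n * τ))
        (F τ - a 0) := by
      have h1 := (hfour τ hτ).update 0 0
      have h2 : Function.update
          (fun n : ℤ => a n * Complex.exp (2 * Real.pi * Complex.I * n * τ)) 0 0
          = fun n : ℤ => d n * Complex.exp (2 * Real.pi * Complex.I * n * τ) := by
        funext n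
        by_cases hn : n = 0
        · subst hn
          simp [Function.update_self, hddef]
        · simp [Function.update_of_ne hn, hddef, hn]
      rw [h2] at h1
      rw [show F τ - a 0 = 0 - a 0 * Complex.exp (2 * Real.pi * Complex.I * ((0:ℤ):ℂ) * τ) + F τ by
        simp only [Int.cast_zero, mul_zero, zero_mul, Complex.exp_zero, mul_one]; ring]
      exact h1
    have htsum : (∑' n : ℤ, d n * Complex.exp (2 * Real.pi * Complex.I * n * τ)) = F τ - a 0 :=
      hsum.tsum_eq
    rw [htsum] at hmain
    have := ((hasDerivAt_id τ).const_mul (a 0)).add hmain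
    exact this.congr_deriv (by ring)
  -- translation property of G
  have hGper : ∀ τ : ℂ, G (τ + 1) = G τ + a 0 := by
    intro τ
    have hexp : ∀ n : ℤ, Complex.exp (2 * Real.pi * Complex.I * n * (τ + 1))
        = Complex.exp (2 * Real.pi * Complex.I * n * τ) := by
      intro n
      rw [mul_add, Complex.exp_add, mul_one]
      have : Complex.exp (2 * Real.pi * Complex.I * n) = 1 := by
        have h := Complex.exp_int_mul_two_pi_mul_I n
        rw [← h]
        congr 1
        push_cast
        ring
      rw [this, mul_one]
    simp only [hGdef, hexp]
    ring
  -- membership facts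
  have hmem : ∀ τ : ℂ, 0 < τ.im → 0 < (-1 / τ).im := by
    intro τ hτ
    have hτ0 : τ ≠ 0 := fun h => by simp [h] at hτ
    have : (-1 / τ).im = τ.im / Complex.normSq τ := by
      rw [neg_div, one_div, Complex.neg_im, Complex.inv_im, neg_div, neg_neg]
    rw [this]
    exact div_pos hτ (Complex.normSq_pos.mpr hτ0)
  -- Q := G(-1/τ) - G τ has zero derivative
  have hQderiv : ∀ τ : ℂ, 0 < τ.im →
      HasDerivAt (fun z => G (-1 / z) - G z) 0 τ := by
    intro τ hτ
    have hτ0 : τ ≠ 0 := fun h => by simp [h] at hτ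
    have hinv : HasDerivAt (fun z : ℂ => -1 / z) ((τ ^ 2)⁻¹) τ := by
      have e : (fun z : ℂ => -1 / z) = -(fun y : ℂ => y⁻¹) := by
        funext z; simp [neg_div]
      rw [e, ← neg_neg (τ ^ 2)⁻¹]
      exact (hasDerivAt_inv hτ0).neg
    have hcomp := (hGderiv (-1 / τ) (hmem τ hτ)).comp τ hinv
    have heq : F (-1 / τ) * (τ ^ 2)⁻¹ = F τ := by
      rw [hmod τ hτ]
      field_simp
    rw [heq] at hcomp
    have := hcomp.sub (hGderiv τ hτ)
    rw [sub_self] at this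
    exact this
  -- Q is constant on the upper half plane
  have hUconv : Convex ℝ {τ : ℂ | 0 < τ.im} := convex_halfSpace_im_gt 0
  have hconst : ∀ τ : ℂ, 0 < τ.im →
      G (-1 / τ) - G τ = G (-1 / Complex.I) - G Complex.I := by
    intro τ hτ
    have hIm : Complex.I ∈ {τ : ℂ | 0 < τ.im} := by simp
    have hτm : τ ∈ {τ : ℂ | 0 < τ.im} := hτ
    have hbd := hUconv.norm_image_sub_le_of_norm_hasFDerivWithin_le
      (f := fun z => G (-1 / z) - G z)
      (f' := fun _ => (0 : ℂ →L[ℝ] ℂ)) (C := 0)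
      (fun x hx => (((hQderiv x hx).hasFDerivAt).restrictScalars ℝ).hasFDerivWithinAt.congr_fderiv
        (by ext1; simp)) (fun x _ => by simp) hIm hτm
    have h0 : ‖(G (-1 / τ) - G τ) - (G (-1 / Complex.I) - G Complex.I)‖ ≤ 0 := by
      simpa using hbd
    exact sub_eq_zero.mp (norm_le_zero_iff.mp h0)
  -- the constant is zero since I is a fixed point of the inversion
  have hGS : ∀ τ : ℂ, 0 < τ.im → G (-1 / τ) = G τ := by
    intro τ hτ
    have h1 := hconst τ hτ
    have h2 : G (-1 / Complex.I) - G Complex.I = 0 := by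
      rw [wt2_eqI]
      ring
    rw [h2] at h1
    exact sub_eq_zero.mp h1
  -- the key relation: G(-1/(z+1)) = G z + a 0
  have E : ∀ z : ℂ, 0 < z.im → G (-1 / (z + 1)) = G z + a 0 := by
    intro z hz
    have h1 : 0 < (z + 1).im := by simpa using hz
    rw [hGS (z + 1) h1, hGper]
  -- run the elliptic point ρ cycle: I → -1/(I+1) → -1+I → I
  have hA := E Complex.I (by simp)
  rw [wt2_eq1] at hA
  have hB := E ((-1+I)/2) (by simp)
  rw [wt2_eq2] at hB
  have hC := E (-1+I) (by simp)
  rw [wt2_eq3] at hC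
  linear_combination (hA + hB + hC) / (-3)
end

section
/- Euler's recurrence for the partition function: for n ≥ 1, p(n) = Σ_{k=1}^∞ (-1)^{k+1} [ p(n - k(3k-1)/2) + p(n - k(3k+1)/2) ], where p(m) = 0 for m < 0. -/
/-- The partition function extended by `0` to negative arguments:
`partitionExt m = p(m)` for `m ≥ 0` and `0` for `m < 0`, with `p(0) = 1`. -/
noncomputable def partitionExt (m : ℤ) : ℤ :=
  if 0 ≤ m then (Fintype.card (Nat.Partition m.toNat) : ℤ) else 0

namespace EulerAux
open Multiset

/-- Ambient multiset containing all partitions of numbers `≤ N`. -/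
def big (N : ℕ) : Multiset ℕ := N • Multiset.range (N + 1)

/-- The predicate: all parts positive, and the parts sum to `n - j(3j+1)/2`. -/
def Ok (n : ℤ) (x : ℤ × Multiset ℕ) : Prop :=
  (∀ m ∈ x.2, 0 < m) ∧ 2 * (x.2.sum : ℤ) = 2 * n - x.1 * (3 * x.1 + 1)

instance (n : ℤ) : DecidablePred (Ok n) := fun _ =>
  inferInstanceAs (Decidable (_ ∧ _))

/-- The finite set of all pairs `(j, λ)` with `λ` a partition of `n - j(3j+1)/2`. -/
noncomputable def T (n : ℤ) : Finset (ℤ × Multiset ℕ) :=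
  ((Finset.Icc (-n) n) ×ˢ (big n.toNat).powerset.toFinset).filter (Ok n)

/-- The Bressoud–Zeilberger involution. -/
def phi (x : ℤ × Multiset ℕ) : ℤ × Multiset ℕ :=
  if (x.2.sup : ℤ) ≤ (x.2.card : ℤ) + 3 * x.1 then
    (x.1 - 1, (((x.2.card : ℤ) + 3 * x.1 - 1).toNat ::ₘ x.2.map (· - 1)).filter (0 < ·))
  else if x.2 = 0 then
    (x.1 + 1, Multiset.replicate (-3 * x.1 - 2).toNat 1)
  else
    (x.1 + 1, (x.2.erase x.2.sup).map (· + 1) +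
      Multiset.replicate ((x.2.sup : ℤ) - (x.2.card : ℤ) - 3 * x.1 - 1).toNat 1)

lemma sup_mem {s : Multiset ℕ} (h : s ≠ 0) : s.sup ∈ s := by
  induction s using Multiset.induction with
  | empty => exact absurd rfl h
  | cons a s ih =>
    rcases eq_or_ne s 0 with rfl | hs
    · simp
    · rw [Multiset.sup_cons]
      rcases le_total a s.sup with h1 | h1
      · rw [sup_eq_right.2 h1]
        exact Multiset.mem_cons_of_mem (ih hs)
      · rw [sup_eq_left.2 h1]; exact Multiset.mem_cons_self _ _

lemma sum_map_pred {s : Multiset ℕ} (h : ∀ x ∈ s, 1 ≤ x) :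
    (s.map (· - 1)).sum + s.card = s.sum := by
  induction s using Multiset.induction with
  | empty => simp
  | cons a s ih =>
    simp only [Multiset.map_cons, Multiset.sum_cons, Multiset.card_cons]
    have ha : 1 ≤ a := h a (Multiset.mem_cons_self _ _)
    have := ih (fun x hx => h x (Multiset.mem_cons_of_mem hx))
    omega

lemma sum_map_succ (s : Multiset ℕ) : (s.map (· + 1)).sum = s.sum + s.card := by
  induction s using Multiset.induction with
  | empty => simp
  | cons a s ih =>
    simp only [Multiset.map_cons, Multiset.sum_cons, Multiset.card_cons]
    omega

lemma mem_big {N : ℕ} {M : Multiset ℕ} (hpos : ∀ x ∈ M, 0 < x) (hsum : M.sum ≤ N) :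
    M ≤ big N := by
  rw [Multiset.le_iff_count]
  intro v
  rw [big, Multiset.count_nsmul]
  rcases lt_or_ge v (N + 1) with hv | hv
  · have h1 : Multiset.count v (Multiset.range (N + 1)) = 1 :=
      Multiset.count_eq_one_of_mem (Multiset.nodup_range _) (Multiset.mem_range.2 hv)
    have h2 : Multiset.count v M ≤ M.card := Multiset.count_le_card _ _
    have h3 : M.card • 1 ≤ M.sum := Multiset.card_nsmul_le_sum (fun x hx => hpos x hx)
    simp only [smul_eq_mul, mul_one] at h3
    rw [h1, mul_one]
    omega
  · have : v ∉ M := fun hm => by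
      have := Multiset.le_sum_of_mem hm; omega
    rw [Multiset.count_eq_zero.2 this]
    exact Nat.zero_le _

lemma pent_nonneg (j : ℤ) : 0 ≤ j * (3 * j + 1) := by
  rcases le_or_gt 0 j with h | h
  · positivity
  · nlinarith

lemma pent_even (j : ℤ) : ∃ c : ℤ, j * (3 * j + 1) = 2 * c := by
  rcases Int.even_or_odd j with ⟨c, hc⟩ | ⟨c, hc⟩
  · exact ⟨c * (3 * j + 1), by rw [hc]; ring⟩
  · exact ⟨j * (3 * c + 2), by rw [hc]; ring⟩


lemma filter_pos_map_pred (M : Multiset ℕ) :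
    (M.map (· - 1)).filter (0 < ·) = (M.filter (fun x => 2 ≤ x)).map (· - 1) := by
  rw [Multiset.filter_map]
  congr 1
  apply Multiset.filter_congr
  intro x _
  simp only [Function.comp]
  omega

lemma map_pred_succ {M : Multiset ℕ} (h : ∀ x ∈ M, 1 ≤ x) :
    (M.map (· - 1)).map (· + 1) = M := by
  rw [Multiset.map_map]
  conv_rhs => rw [← Multiset.map_id M]
  exact Multiset.map_congr rfl fun x hx => by have := h x hx; simp only [Function.comp, id_eq]; omega

lemma all_one_eq_replicate {M : Multiset ℕ} (h : ∀ x ∈ M, x = 1) :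
    M = Multiset.replicate M.card 1 :=
  Multiset.eq_replicate.2 ⟨rfl, h⟩

lemma sup_replicate_one {r : ℕ} (hr : 1 ≤ r) : (Multiset.replicate r 1).sup = 1 :=
  le_antisymm (Multiset.sup_le.2 fun b hb => le_of_eq (Multiset.eq_of_mem_replicate hb))
    (Multiset.le_sup (Multiset.mem_replicate.2 ⟨by omega, rfl⟩))

lemma filter_pos_replicate_zero (m : ℕ) : (Multiset.replicate m 0).filter (0 < ·) = 0 :=
  Multiset.filter_eq_nil.2 fun a ha => by rw [Multiset.eq_of_mem_replicate ha]; omega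

lemma ok_mem_T {n : ℤ} (hn : 1 ≤ n) {x : ℤ × Multiset ℕ} (h : Ok n x) : x ∈ T n := by
  obtain ⟨j, M⟩ := x
  obtain ⟨hpos, hsum⟩ := h
  simp only at hpos hsum
  rw [T, Finset.mem_filter]
  refine ⟨Finset.mem_product.2 ⟨?_, ?_⟩, hpos, hsum⟩
  · rw [Finset.mem_Icc]
    have h1 : j * (3 * j + 1) ≤ 2 * n := by
      have : (0 : ℤ) ≤ (M.sum : ℤ) := Int.natCast_nonneg _
      linarith
    have h2 : 0 ≤ j * (j + 1) := by
      rcases le_or_gt 0 j with hj | hj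
      · positivity
      · nlinarith
    have h3 : j * j ≤ n := by nlinarith
    constructor
    · nlinarith [sq_nonneg (j + 1)]
    · nlinarith [sq_nonneg (j - 1)]
  · rw [Multiset.mem_toFinset, Multiset.mem_powerset]
    apply mem_big hpos
    have h1 : (M.sum : ℤ) ≤ n := by nlinarith [pent_nonneg j]
    omega

lemma phi_ok {n : ℤ} (hn : 1 ≤ n) {x : ℤ × Multiset ℕ} (h : Ok n x) :
    Ok n (phi x) ∧ phi (phi x) = x := by
  obtain ⟨j, M⟩ := x
  obtain ⟨hpos, hsum⟩ := h
  simp only at hpos hsum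
  by_cases hM : M = 0
  · subst hM
    simp only [Multiset.sum_zero, Nat.cast_zero, mul_zero] at hsum
    have e1 : j * (3 * j + 1) = 2 * n := by linarith
    have hj0 : j ≠ 0 := by rintro rfl; simp at e1; omega
    by_cases hj : 0 ≤ j
    · -- j ≥ 1 : phi (j, 0) = (j-1, {3j-1})
      have hj1 : 1 ≤ j := by omega
      have hc1 : (((0 : Multiset ℕ).sup : ℤ)) ≤ (((0 : Multiset ℕ).card : ℤ)) + 3 * j := by
        simp [Multiset.sup_zero]
        omega
      have hphi : phi (j, (0 : Multiset ℕ)) = (j - 1, {(3 * j - 1).toNat}) := by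
        simp only [phi]
        rw [if_pos hc1]
        simp only [Multiset.card_zero, Nat.cast_zero, zero_add, Multiset.map_zero]
        rw [Multiset.filter_cons_of_pos _ (by omega), Multiset.filter_zero,
          Multiset.cons_zero]
      rw [hphi]
      have hg : (((3 * j - 1).toNat : ℕ) : ℤ) = 3 * j - 1 := by omega
      refine ⟨⟨fun m hm => ?_, ?_⟩, ?_⟩
      · rw [Multiset.mem_singleton] at hm; omega
      · show 2 * ((Multiset.sum {(3 * j - 1).toNat} : ℕ) : ℤ) = _
        rw [Multiset.sum_singleton]
        rw [hg]
        linear_combination e1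
      · -- phi (j-1, {3j-1}) = (j, 0)
        simp only [phi]
        rw [if_neg (by simp only [Multiset.sup_singleton, Multiset.card_singleton]; omega),
          if_neg (by simp)]
        simp only [Multiset.sup_singleton, Multiset.card_singleton, Multiset.erase_singleton,
          Multiset.map_zero]
        rw [show ((((3 * j - 1).toNat : ℕ) : ℤ) - (1 : ℕ) - 3 * (j - 1) - 1).toNat = 0 by omega]
        simp
    · -- j ≤ -1 : phi (j, 0) = (j+1, replicate (-3j-2) 1)
      have hj1 : j ≤ -1 := by omega
      have hc1 : ¬ ((((0 : Multiset ℕ).sup : ℤ)) ≤ (((0 : Multiset ℕ).card : ℤ)) + 3 * j) := by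
        simp [Multiset.sup_zero]
        omega
      have hphi : phi (j, (0 : Multiset ℕ)) =
          (j + 1, Multiset.replicate (-3 * j - 2).toNat 1) := by
        simp only [phi]
        rw [if_neg hc1, if_pos trivial]
      rw [hphi]
      have hr : (((-3 * j - 2).toNat : ℕ) : ℤ) = -3 * j - 2 := by omega
      have hrsum : ((Multiset.replicate (-3 * j - 2).toNat 1).sum : ℕ) = (-3 * j - 2).toNat := by
        rw [Multiset.sum_replicate, smul_eq_mul, mul_one]
      refine ⟨⟨fun m hm => ?_, ?_⟩, ?_⟩
      · rw [Multiset.eq_of_mem_replicate hm]; omega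
      · show 2 * (((Multiset.replicate (-3 * j - 2).toNat 1).sum : ℕ) : ℤ) = _
        rw [hrsum, hr]
        linear_combination e1
      · -- phi (j+1, replicate r 1) = (j, 0)
        have hrpos : 1 ≤ (-3 * j - 2).toNat := by omega
        have hne : Multiset.replicate (-3 * j - 2).toNat 1 ≠ 0 := by
          intro hcon
          have := congrArg Multiset.card hcon
          simp at this
          omega
        simp only [phi]
        rw [if_pos (by
          rw [sup_replicate_one hrpos, Multiset.card_replicate]
          push_cast
          omega)]
        simp only [Prod.mk.injEq]
        refine ⟨by first | trivial | ring, ?_⟩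
        have hmap : (Multiset.replicate (-3 * j - 2).toNat 1).map (· - 1)
            = Multiset.replicate (-3 * j - 2).toNat 0 := by
          rw [Multiset.map_replicate]
        rw [hmap]
        rw [show (((Multiset.replicate (-3 * j - 2).toNat 1).card : ℤ) + 3 * (j + 1) - 1).toNat
            = 0 by rw [Multiset.card_replicate]; omega]
        rw [Multiset.filter_cons_of_neg _ (by omega)]
        exact filter_pos_replicate_zero _
  · -- M ≠ 0
    have haM : M.sup ∈ M := sup_mem hM
    have ha1 : 1 ≤ M.sup := hpos _ haM
    have ht1 : 1 ≤ M.card := by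
      rw [Nat.one_le_iff_ne_zero]
      simpa [Multiset.card_eq_zero] using hM
    by_cases hc1 : (M.sup : ℤ) ≤ (M.card : ℤ) + 3 * j
    · by_cases ht3 : (M.card : ℤ) + 3 * j = 1
      · -- degenerate : M = replicate t 1, phi = (j-1, 0)
        have hall1 : ∀ x ∈ M, x = 1 := fun x hx => by
          have h1 := Multiset.le_sup hx
          have h2 := hpos x hx
          omega
        have hrep : M = Multiset.replicate M.card 1 := all_one_eq_replicate hall1
        have hSum : (M.sum : ℤ) = (M.card : ℤ) := by
          have : M.sum = M.card := by
            conv_lhs => rw [hrep]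
            rw [Multiset.sum_replicate, smul_eq_mul, mul_one]
          exact_mod_cast this
        have hphi : phi (j, M) = (j - 1, 0) := by
          simp only [phi]
          rw [if_pos hc1]
          simp only [Prod.mk.injEq]
          refine ⟨by trivial, ?_⟩
          rw [show ((M.card : ℤ) + 3 * j - 1).toNat = 0 by omega]
          rw [Multiset.filter_cons_of_neg _ (by omega)]
          have hmap : M.map (· - 1) = Multiset.replicate M.card 0 := by
            conv_lhs => rw [hrep]
            rw [Multiset.map_replicate]
          rw [hmap]
          exact filter_pos_replicate_zero _
        rw [hphi]
        refine ⟨⟨fun m hm => absurd hm (Multiset.notMem_zero m), ?_⟩, ?_⟩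
        · show 2 * (((0 : Multiset ℕ).sum : ℕ) : ℤ) = _
          rw [Multiset.sum_zero]
          push_cast
          linear_combination hsum - 2 * hSum - 2 * ht3
        · simp only [phi]
          rw [if_neg (by
            simp only [Multiset.sup_zero, Multiset.card_zero, bot_eq_zero', Nat.cast_zero]
            omega), if_pos trivial]
          simp only [Prod.mk.injEq]
          refine ⟨by first | trivial | ring, ?_⟩
          rw [show (-3 * (j - 1) - 2).toNat = M.card by omega]
          exact hrep.symm
      · -- main case B
        have ht2 : 2 ≤ (M.card : ℤ) + 3 * j := by omega
        set M2 := M.filter (fun x => 2 ≤ x) with hM2def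
        set m1 := (M.filter (fun x => ¬ 2 ≤ x)).card with hm1def
        have hM1 : M.filter (fun x => ¬ 2 ≤ x) = Multiset.replicate m1 1 := by
          rw [hm1def]
          apply all_one_eq_replicate
          intro x hx
          have h1 := Multiset.of_mem_filter hx
          have h2 := hpos x (Multiset.mem_of_mem_filter hx)
          omega
        have hsplit : M2 + Multiset.replicate m1 1 = M := by
          rw [← hM1, hM2def]
          exact Multiset.filter_add_not _ M
        have hcardN : M2.card + m1 = M.card := by
          conv_rhs => rw [← hsplit]
          rw [Multiset.card_add, Multiset.card_replicate]
        have hcard : (M.card : ℤ) = (M2.card : ℤ) + m1 := by exact_mod_cast hcardN.symm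
        have hsumN : M2.sum + m1 = M.sum := by
          conv_rhs => rw [← hsplit]
          rw [Multiset.sum_add, Multiset.sum_replicate, smul_eq_mul, mul_one]
        have hsum2 : (M.sum : ℤ) = (M2.sum : ℤ) + m1 := by exact_mod_cast hsumN.symm
        have hM2ge : ∀ x ∈ M2, 2 ≤ x := fun x hx => Multiset.of_mem_filter hx
        have hR : (M.map (· - 1)).filter (0 < ·) = M2.map (· - 1) := by
          rw [hM2def]
          exact filter_pos_map_pred M
        have hRsum : (((M2.map (· - 1)).sum : ℕ) : ℤ) + (M2.card : ℤ) = ((M2.sum : ℕ) : ℤ) := by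
          exact_mod_cast sum_map_pred (fun x hx => by have := hM2ge x hx; omega)
        set h0 := ((M.card : ℤ) + 3 * j - 1).toNat with hh0def
        have hh0 : ((h0 : ℕ) : ℤ) = (M.card : ℤ) + 3 * j - 1 := by rw [hh0def]; omega
        have hphi : phi (j, M) = (j - 1, h0 ::ₘ M2.map (· - 1)) := by
          simp only [phi]
          rw [if_pos hc1]
          simp only [Prod.mk.injEq]
          refine ⟨by trivial, ?_⟩
          rw [Multiset.filter_cons_of_pos _ (by omega), hR]
        have hsup : (h0 ::ₘ M2.map (· - 1)).sup = h0 := by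
          rw [Multiset.sup_cons, sup_eq_left]
          apply Multiset.sup_le.2
          intro b hb
          obtain ⟨y, hy, rfl⟩ := Multiset.mem_map.1 hb
          have h1 : y ≤ M.sup := Multiset.le_sup (Multiset.mem_of_mem_filter hy)
          omega
        have hcardν : (((h0 ::ₘ M2.map (· - 1)).card : ℕ) : ℤ) = (M2.card : ℤ) + 1 := by
          rw [Multiset.card_cons, Multiset.card_map]
          push_cast
          ring
        have hsumν : (((h0 ::ₘ M2.map (· - 1)).sum : ℕ) : ℤ)
            = ((h0 : ℕ) : ℤ) + (((M2.map (· - 1)).sum : ℕ) : ℤ) := by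
          rw [Multiset.sum_cons]
          push_cast
          ring
        rw [hphi]
        refine ⟨⟨?_, ?_⟩, ?_⟩
        · intro b hb
          rcases Multiset.mem_cons.1 hb with rfl | hb
          · omega
          · obtain ⟨y, hy, rfl⟩ := Multiset.mem_map.1 hb
            have := hM2ge y hy
            omega
        · show 2 * (((h0 ::ₘ M2.map (· - 1)).sum : ℕ) : ℤ) = _
          rw [hsumν]
          linear_combination hsum + 2 * hh0 + 2 * hRsum - 2 * hsum2 + 2 * hcard
        · simp only [phi]
          rw [if_neg (by rw [hsup]; omega), if_neg (Multiset.cons_ne_zero)]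
          simp only [Prod.mk.injEq]
          refine ⟨by first | trivial | ring, ?_⟩
          rw [hsup, Multiset.erase_cons_head]
          rw [map_pred_succ (fun x hx => by have := hM2ge x hx; omega)]
          rw [show (((h0 : ℕ) : ℤ) - ((h0 ::ₘ M2.map (· - 1)).card : ℤ) - 3 * (j - 1) - 1).toNat
              = m1 by omega]
          rw [← hM1, hM2def]
          exact Multiset.filter_add_not _ M
    · -- case A : a ≥ t + 3j + 1
      have hlt : (M.card : ℤ) + 3 * j < (M.sup : ℤ) := not_le.1 hc1
      have hME : M.sup ::ₘ M.erase M.sup = M := Multiset.cons_erase haM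
      have hcardE : (M.erase M.sup).card + 1 = M.card := by
        conv_rhs => rw [← hME]
        rw [Multiset.card_cons]
      have hcardE' : ((M.erase M.sup).card : ℤ) + 1 = (M.card : ℤ) := by exact_mod_cast hcardE
      have hsumE : ((M.erase M.sup).sum : ℤ) + (M.sup : ℤ) = (M.sum : ℤ) := by
        have : M.sup + (M.erase M.sup).sum = M.sum := by
          conv_rhs => rw [← hME]
          rw [Multiset.sum_cons]
        push_cast [← this]
        ring
      set m := ((M.sup : ℤ) - (M.card : ℤ) - 3 * j - 1).toNat with hmdef
      have hm' : ((m : ℕ) : ℤ) = (M.sup : ℤ) - (M.card : ℤ) - 3 * j - 1 := by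
        rw [hmdef]; omega
      set μ := (M.erase M.sup).map (· + 1) + Multiset.replicate m 1 with hμdef
      have hphi : phi (j, M) = (j + 1, μ) := by
        simp only [phi]
        rw [if_neg hc1, if_neg hM]
      have hposμ : ∀ x ∈ μ, 0 < x := by
        intro x hx
        rw [hμdef] at hx
        rcases Multiset.mem_add.1 hx with hx | hx
        · obtain ⟨y, _, rfl⟩ := Multiset.mem_map.1 hx
          omega
        · rw [Multiset.eq_of_mem_replicate hx]
          omega
      have hsumμ : ((μ.sum : ℕ) : ℤ)
          = ((M.erase M.sup).sum : ℤ) + ((M.erase M.sup).card : ℤ) + (m : ℤ) := by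
        rw [hμdef, Multiset.sum_add, sum_map_succ, Multiset.sum_replicate, smul_eq_mul, mul_one]
        push_cast
        ring
      have hcardμ : ((μ.card : ℕ) : ℤ) = ((M.erase M.sup).card : ℤ) + (m : ℤ) := by
        rw [hμdef, Multiset.card_add, Multiset.card_map, Multiset.card_replicate]
        push_cast
        ring
      rw [hphi]
      refine ⟨⟨hposμ, ?_⟩, ?_⟩
      · show 2 * ((μ.sum : ℕ) : ℤ) = _
        rw [hsumμ]
        linear_combination 2 * hm' + 2 * hsumE + 2 * hcardE' + hsum
      · by_cases hμ0 : μ = 0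
        · have hc0 : (M.erase M.sup).card + m = 0 := by
            have h5 := congrArg Multiset.card hμ0
            rw [hμdef] at h5
            rwa [Multiset.card_add, Multiset.card_map, Multiset.card_replicate,
              Multiset.card_zero] at h5
          have hE0 : M.erase M.sup = 0 := Multiset.card_eq_zero.1 (by omega)
          have hm0 : m = 0 := by omega
          have hME' : M.sup ::ₘ 0 = M := by rw [← hE0]; exact hME
          have hcard1 : M.card = 1 := by
            rw [← hME']
            rfl
          have haj : (M.sup : ℤ) = 3 * j + 2 := by omega
          have hj0 : 0 ≤ j := by omega
          rw [hμ0]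
          simp only [phi]
          rw [if_pos (by
            simp only [Multiset.sup_zero, Multiset.card_zero, bot_eq_zero', Nat.cast_zero]
            omega)]
          simp only [Prod.mk.injEq]
          refine ⟨by first | trivial | ring, ?_⟩
          rw [Multiset.map_zero]
          rw [show (((0 : Multiset ℕ).card : ℤ) + 3 * (j + 1) - 1).toNat = M.sup by
            rw [Multiset.card_zero]; omega]
          rw [Multiset.filter_cons_of_pos _ (show 0 < M.sup from ha1), Multiset.filter_zero]
          exact hME'
        · -- μ ≠ 0
          have hsupμ : μ.sup ≤ M.sup + 1 := by
            apply Multiset.sup_le.2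
            intro b hb
            rw [hμdef] at hb
            rcases Multiset.mem_add.1 hb with hb | hb
            · obtain ⟨y, hy, rfl⟩ := Multiset.mem_map.1 hb
              have := Multiset.le_sup (Multiset.mem_of_mem_erase hy)
              omega
            · rw [Multiset.eq_of_mem_replicate hb]
              omega
          simp only [phi]
          rw [if_pos (by
            have h6 : ((μ.sup : ℕ) : ℤ) ≤ (M.sup : ℤ) + 1 := by exact_mod_cast hsupμ
            omega)]
          simp only [Prod.mk.injEq]
          refine ⟨by first | trivial | ring, ?_⟩
          rw [show ((μ.card : ℤ) + 3 * (j + 1) - 1).toNat = M.sup by omega]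
          have hmapμ : μ.map (· - 1) = (M.erase M.sup) + Multiset.replicate m 0 := by
            rw [hμdef, Multiset.map_add, Multiset.map_map, Multiset.map_replicate]
            congr 1
            conv_rhs => rw [← Multiset.map_id (M.erase M.sup)]
            exact Multiset.map_congr rfl fun x hx => by simp
          rw [hmapμ]
          rw [Multiset.filter_cons_of_pos _ (show 0 < M.sup from ha1), Multiset.filter_add]
          rw [Multiset.filter_eq_self.2 (fun y hy => hpos y (Multiset.mem_of_mem_erase hy))]
          rw [filter_pos_replicate_zero, add_zero]
          exact hME

/-- sign -/
def sgn (j : ℤ) : ℤ := (-1) ^ j.natAbs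

lemma sgn_succ (j : ℤ) : sgn (j + 1) = - sgn j := by
  unfold sgn
  rcases Int.even_or_odd j with he | ho
  · rw [Even.neg_one_pow (Int.natAbs_even.2 he), Odd.neg_one_pow (Int.natAbs_odd.2 he.add_one)]
  · rw [Odd.neg_one_pow (Int.natAbs_odd.2 ho), Even.neg_one_pow (Int.natAbs_even.2 ho.add_one)]
    ring

lemma phi_fst (x : ℤ × Multiset ℕ) : (phi x).1 = x.1 - 1 ∨ (phi x).1 = x.1 + 1 := by
  unfold phi
  split_ifs <;> simp

lemma sgn_phi (x : ℤ × Multiset ℕ) : sgn x.1 + sgn (phi x).1 = 0 := by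
  rcases phi_fst x with h | h <;> rw [h]
  · have := sgn_succ (x.1 - 1)
    rw [sub_add_cancel] at this
    rw [this]; ring
  · rw [sgn_succ]; ring

lemma sum_T_zero {n : ℤ} (hn : 1 ≤ n) : ∑ x ∈ T n, sgn x.1 = 0 := by
  refine Finset.sum_involution (fun x _ => phi x) ?_ ?_ ?_ ?_
  · intro x _
    exact sgn_phi x
  · intro x _ _ hfix
    have h1 := phi_fst x
    have h2 : (phi x).1 = x.1 := congrArg Prod.fst hfix
    omega
  · intro x hx
    exact ok_mem_T hn (phi_ok hn ((Finset.mem_filter.1 hx).2)).1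
  · intro x hx
    exact (phi_ok hn ((Finset.mem_filter.1 hx).2)).2

lemma card_fiber {n : ℤ} (hn : 1 ≤ n) (j : ℤ) :
    ((((big n.toNat).powerset.toFinset.filter (fun M => Ok n (j, M))).card : ℤ))
      = partitionExt (n - j * (3 * j + 1) / 2) := by
  obtain ⟨c, hc⟩ := pent_even j
  have hc0 : 0 ≤ c := by have := pent_nonneg j; omega
  have hdiv : j * (3 * j + 1) / 2 = c := by rw [hc]; omega
  rw [hdiv]
  rcases le_or_gt c n with hcn | hcn
  · rw [partitionExt, if_pos (by omega)]
    norm_cast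
    rw [← Finset.card_univ]
    have key : ∀ M ∈ (big n.toNat).powerset.toFinset.filter (fun M => Ok n (j, M)),
        M.sum = (n - c).toNat := by
      intro M hM
      have h2 := (Finset.mem_filter.1 hM).2.2
      simp only at h2
      rw [hc] at h2
      omega
    refine Finset.card_bij (fun M hM =>
        (⟨M, fun {i} hi => (Finset.mem_filter.1 hM).2.1 i hi, key M hM⟩ :
          Nat.Partition (n - c).toNat)) (fun a ha => Finset.mem_univ _) ?_ ?_
    · intro a ha b hb hab
      exact congrArg Nat.Partition.parts hab
    · intro p _
      refine ⟨p.parts, ?_, rfl⟩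
      rw [Finset.mem_filter]
      refine ⟨?_, fun i hi => p.parts_pos hi, ?_⟩
      · rw [Multiset.mem_toFinset, Multiset.mem_powerset]
        apply mem_big (fun i hi => p.parts_pos hi)
        rw [p.parts_sum]
        omega
      · show 2 * ((p.parts.sum : ℕ) : ℤ) = 2 * n - j * (3 * j + 1)
        rw [p.parts_sum, hc]
        omega
  · rw [partitionExt, if_neg (by omega)]
    norm_cast
    rw [Finset.card_eq_zero, Finset.filter_eq_empty_iff]
    intro M _ hOk
    have h2 := hOk.2
    simp only at h2
    rw [hc] at h2
    omega

lemma step2 {n : ℤ} (hn : 1 ≤ n) :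
    ∑ x ∈ T n, sgn x.1
      = ∑ j ∈ Finset.Icc (-n) n, sgn j * partitionExt (n - j * (3 * j + 1) / 2) := by
  rw [T, Finset.sum_filter, Finset.sum_product]
  refine Finset.sum_congr rfl fun j _ => ?_
  rw [← card_fiber hn j, ← Finset.sum_filter]
  trans (∑ _a ∈ (big n.toNat).powerset.toFinset.filter (fun M => Ok n (j, M)), sgn j)
  · rfl
  · rw [Finset.sum_const, nsmul_eq_mul, mul_comm]

lemma step3 {n : ℤ} (hn : 1 ≤ n) :
    ∑ j ∈ Finset.Icc (-n) n, sgn j * partitionExt (n - j * (3 * j + 1) / 2)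
      = partitionExt n - ∑ k ∈ Finset.Icc 1 n.toNat, (-1 : ℤ) ^ (k + 1) *
        (partitionExt (n - (k * (3 * k - 1) / 2 : ℕ)) +
          partitionExt (n - (k * (3 * k + 1) / 2 : ℕ))) := by
  have hsplit : Finset.Icc (-n) n = Finset.Ico (-n) 0 ∪ Finset.Icc 0 n := by
    ext x
    simp only [Finset.mem_Icc, Finset.mem_union, Finset.mem_Ico]
    omega
  have hdisj : Disjoint (Finset.Ico (-n) 0) (Finset.Icc 0 n) := by
    rw [Finset.disjoint_left]
    intro a ha hb
    rw [Finset.mem_Ico] at ha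
    rw [Finset.mem_Icc] at hb
    omega
  have h0 : Finset.Icc (0 : ℤ) n = insert 0 (Finset.Icc 1 n) := by
    ext x
    simp only [Finset.mem_Icc, Finset.mem_insert]
    omega
  have h0notmem : (0 : ℤ) ∉ Finset.Icc (1 : ℤ) n := by simp
  rw [hsplit, Finset.sum_union hdisj, h0, Finset.sum_insert h0notmem]
  have hterm0 : sgn 0 * partitionExt (n - 0 * (3 * 0 + 1) / 2) = partitionExt n := by
    norm_num [sgn]
  rw [hterm0]
  have hneg : ∑ j ∈ Finset.Ico (-n) 0, sgn j * partitionExt (n - j * (3 * j + 1) / 2)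
      = ∑ k ∈ Finset.Icc 1 n.toNat,
          (-1 : ℤ) ^ k * partitionExt (n - (k * (3 * k - 1) / 2 : ℕ)) := by
    refine Finset.sum_nbij' (i := fun j => (-j).toNat) (j := fun k => -(k : ℤ))
      ?_ ?_ ?_ ?_ ?_
    · intro a ha
      rw [Finset.mem_Ico] at ha
      rw [Finset.mem_Icc]
      omega
    · intro a ha
      rw [Finset.mem_Icc] at ha
      rw [Finset.mem_Ico]
      omega
    · intro a ha
      rw [Finset.mem_Ico] at ha
      omega
    · intro a ha
      rw [Finset.mem_Icc] at ha
      omega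
    · intro a ha
      rw [Finset.mem_Ico] at ha
      set k := (-a).toNat with hk
      have hak : a = -(k : ℤ) := by omega
      have hsgn : sgn a = (-1 : ℤ) ^ k := by
        simp only [sgn]
        congr 1
        omega
      have hq : ((k * (3 * k - 1) : ℕ) : ℤ) = a * (3 * a + 1) := by
        push_cast [Nat.cast_sub (by omega : 1 ≤ 3 * k)]
        rw [hak]
        ring
      have hdiv : a * (3 * a + 1) / 2 = ((k * (3 * k - 1) / 2 : ℕ) : ℤ) := by
        rw [← hq]
        omega
      rw [hsgn, hdiv]
  have hpos : ∑ j ∈ Finset.Icc (1 : ℤ) n, sgn j * partitionExt (n - j * (3 * j + 1) / 2)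
      = ∑ k ∈ Finset.Icc 1 n.toNat,
          (-1 : ℤ) ^ k * partitionExt (n - (k * (3 * k + 1) / 2 : ℕ)) := by
    refine Finset.sum_nbij' (i := fun j => j.toNat) (j := fun k => (k : ℤ)) ?_ ?_ ?_ ?_ ?_
    · intro a ha
      rw [Finset.mem_Icc] at ha ⊢
      omega
    · intro a ha
      rw [Finset.mem_Icc] at ha ⊢
      omega
    · intro a ha
      rw [Finset.mem_Icc] at ha
      omega
    · intro a ha
      rw [Finset.mem_Icc] at ha
      omega
    · intro a ha
      rw [Finset.mem_Icc] at ha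
      set k := a.toNat with hk
      have hak : a = (k : ℤ) := by omega
      have hsgn : sgn a = (-1 : ℤ) ^ k := by
        simp only [sgn]
        congr 1
        omega
      have hq : ((k * (3 * k + 1) : ℕ) : ℤ) = a * (3 * a + 1) := by
        push_cast
        rw [hak]
      have hdiv : a * (3 * a + 1) / 2 = ((k * (3 * k + 1) / 2 : ℕ) : ℤ) := by
        rw [← hq]
        omega
      rw [hsgn, hdiv]
  rw [hneg, hpos]
  have hrw : ∀ k ∈ Finset.Icc 1 n.toNat, (-1 : ℤ) ^ (k + 1) *
        (partitionExt (n - (k * (3 * k - 1) / 2 : ℕ)) +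
          partitionExt (n - (k * (3 * k + 1) / 2 : ℕ)))
      = -((-1 : ℤ) ^ k * partitionExt (n - (k * (3 * k - 1) / 2 : ℕ))
          + (-1 : ℤ) ^ k * partitionExt (n - (k * (3 * k + 1) / 2 : ℕ))) := by
    intro k _
    rw [pow_succ]
    ring
  rw [Finset.sum_congr rfl hrw, Finset.sum_neg_distrib, Finset.sum_add_distrib]
  ring

end EulerAux

/-- Euler's recurrence for the partition function: for `n ≥ 1`,
`p(n) = Σ_{k≥1} (-1)^{k+1} [p(n - k(3k-1)/2) + p(n - k(3k+1)/2)]`, where `p(m) = 0`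
for `m < 0`.  The terms with `k > n` vanish, so the sum may be taken over `1 ≤ k ≤ n`. -/
theorem euler_partition_recurrence (n : ℤ) (hn : 1 ≤ n) :
    partitionExt n =
      ∑ k ∈ Finset.Icc 1 n.toNat, (-1 : ℤ) ^ (k + 1) *
        (partitionExt (n - (k * (3 * k - 1) / 2 : ℕ)) +
          partitionExt (n - (k * (3 * k + 1) / 2 : ℕ))) := by
  have h := EulerAux.sum_T_zero hn
  rw [EulerAux.step2 hn, EulerAux.step3 hn] at h
  linarith
end

section
/- Rademacher-type formula via duality: for 1 ≤ r ≤ 24 and n ≥ 1, p_r(n) = −c_{r/24}, where c_{r/24} is the coefficient of q^{r/24} in the Fourier expansion of the Poincaré series P_{2+r/2, −n+r/24}; explicitly, the constant term of P_{2+r/2,−n+r/24} · η^{−r} (a weight-2 unrestricted modular form on SL₂(ℤ)) is p_r(n) + c_{r/24} = 0. -/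
open Complex Real

/-- The number of `r`-color partitions of `n`: multisets of pairs (part, color) with
part a positive integer and color in `{1, …, r}`, whose parts sum to `n`. -/
noncomputable def colorPartitions (r n : ℕ) : ℕ :=
  Nat.card {m : Multiset (ℕ+ × Fin r) // (m.map fun p => (p.1 : ℕ)).sum = n}

private lemma colorPartitions_zero' (r : ℕ) :
    Nat.card {m : Multiset (ℕ+ × Fin r) // (m.map fun p => (p.1 : ℕ)).sum = 0} = 1 := by
  rw [Nat.card_eq_one_iff_unique]
  have h0 : ∀ (x : Multiset (ℕ+ × Fin r)), (x.map fun p => (p.1 : ℕ)).sum = 0 → x = 0 := by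
    intro x hx
    rw [Multiset.eq_zero_iff_forall_notMem]
    intro a ha
    have := Multiset.sum_eq_zero_iff.mp hx (a.1 : ℕ) (Multiset.mem_map_of_mem _ ha)
    exact absurd this a.1.pos.ne'
  refine ⟨⟨?_⟩, ⟨⟨0, by simp⟩⟩⟩
  rintro ⟨m, hm⟩ ⟨m', hm'⟩
  exact Subtype.ext ((h0 m hm).trans (h0 m' hm').symm)

private lemma norm_cexp_arc (w : ℝ) (τ : ℂ) :
    ‖Complex.exp (2 * π * Complex.I * (w : ℂ) * τ)‖ = Real.exp (-(2 * π * w * τ.im)) := by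
  rw [Complex.norm_exp]
  congr 1
  have h : (2 * (π : ℂ) * Complex.I * (w : ℂ) * τ) = (((2 * π * w : ℝ)) : ℂ) * (Complex.I * τ) := by
    push_cast; ring
  rw [h]
  simp [Complex.mul_re, Complex.mul_im, Complex.I_re, Complex.I_im]

private lemma sin_arc {θ : ℝ} (h1 : π / 3 ≤ θ) (h2 : θ ≤ 2 * π / 3) :
    1 / 2 ≤ Real.sin θ := by
  have hπ := Real.pi_pos
  have hkey : Real.sin (π / 3) ≤ Real.sin θ := by
    rcases le_or_gt θ (π / 2) with h | h
    · exact Real.sin_le_sin_of_le_of_le_pi_div_two (by linarith) h h1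
    · rw [← Real.sin_pi_sub θ]
      exact Real.sin_le_sin_of_le_of_le_pi_div_two (by linarith) (by linarith) (by linarith)
  rw [Real.sin_pi_div_three] at hkey
  nlinarith [Real.sq_sqrt (by norm_num : (0:ℝ) ≤ 3), Real.sqrt_nonneg 3]

private lemma exp_est {κ u : ℝ} (hu1 : 1 / 4 ≤ u) (hu2 : u ≤ 3 / 4) (ℓ : ℕ) :
    Real.exp (-(2 * π * ((ℓ : ℝ) + κ) * u))
      ≤ Real.exp (2 * π * |κ|) * Real.exp (-(π / 2)) ^ ℓ := by
  have hπ := Real.pi_pos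
  have hu0 : 0 < u := by linarith
  rw [← Real.exp_nat_mul, ← Real.exp_add]
  apply Real.exp_le_exp.mpr
  have habs : -(2 * π * κ * u) ≤ 2 * π * |κ| := by
    have h1 : -(2 * π * κ * u) = (2 * π * u) * (-κ) := by ring
    have h2 : (2 * π * u) * (-κ) ≤ (2 * π * u) * |κ| :=
      mul_le_mul_of_nonneg_left (neg_le_abs κ) (by positivity)
    have h3 : (2 * π * u) * |κ| ≤ (2 * π * 1) * |κ| := by
      apply mul_le_mul_of_nonneg_right _ (abs_nonneg κ)
      have hu : u ≤ 1 := by linarith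
      have := mul_le_mul_of_nonneg_left hu (by positivity : (0:ℝ) ≤ 2 * π)
      linarith
    have h4 : (2 * π * 1) * |κ| = 2 * π * |κ| := by ring
    linarith
  have hl : -(2 * π * (ℓ : ℝ) * u) ≤ (ℓ : ℝ) * (-(π / 2)) := by
    have hn : (0 : ℝ) ≤ 2 * π * (ℓ : ℝ) := by positivity
    have := mul_le_mul_of_nonneg_left hu1 hn
    nlinarith
  have expand : -(2 * π * ((ℓ : ℝ) + κ) * u) = -(2 * π * (ℓ : ℝ) * u) + -(2 * π * κ * u) := by
    ring
  linarith

private lemma series_geo_bound {a : ℕ → ℂ} {κ : ℝ}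
    (hsum : Summable (fun ℓ : ℕ =>
      a ℓ * Complex.exp (2 * π * Complex.I * ((((ℓ : ℝ) + κ : ℝ)) : ℂ) * (Complex.I / 4)))) :
    ∃ C : ℝ, 0 ≤ C ∧ ∀ (ℓ : ℕ) (τ : ℂ), 1 / 2 ≤ τ.im → τ.im ≤ 1 →
      ‖a ℓ * Complex.exp (2 * π * Complex.I * ((((ℓ : ℝ) + κ : ℝ)) : ℂ) * τ)‖
        ≤ C * Real.exp (-(π / 2)) ^ ℓ := by
  have hπ := Real.pi_pos
  have him : (Complex.I / 4).im = 1 / 4 := by simp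
  obtain ⟨M, hM⟩ := (hsum.tendsto_atTop_zero.norm.bddAbove_range)
  simp only [upperBounds, Set.mem_range, forall_exists_index, Set.mem_setOf_eq] at hM
  have hMb : ∀ ℓ : ℕ, ‖a ℓ‖ * Real.exp (-(2 * π * ((ℓ : ℝ) + κ) * (1 / 4))) ≤ M := by
    intro ℓ
    have h := hM ℓ rfl
    rwa [norm_mul, norm_cexp_arc, him] at h
  have hM0 : 0 ≤ M := le_trans (by positivity) (hMb 0)
  refine ⟨M * Real.exp (2 * π * |κ|), by positivity, ?_⟩
  intro ℓ τ ht1 ht2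
  rw [norm_mul, norm_cexp_arc]
  have key1 : ‖a ℓ‖ * Real.exp (-(2 * π * ((ℓ : ℝ) + κ) * τ.im))
      = (‖a ℓ‖ * Real.exp (-(2 * π * ((ℓ : ℝ) + κ) * (1 / 4))))
        * Real.exp (-(2 * π * ((ℓ : ℝ) + κ) * (τ.im - 1 / 4))) := by
    rw [mul_assoc (‖a ℓ‖), ← Real.exp_add]
    congr 2
    ring
  rw [key1]
  calc (‖a ℓ‖ * Real.exp (-(2 * π * ((ℓ : ℝ) + κ) * (1 / 4))))
        * Real.exp (-(2 * π * ((ℓ : ℝ) + κ) * (τ.im - 1 / 4)))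
      ≤ M * (Real.exp (2 * π * |κ|) * Real.exp (-(π / 2)) ^ ℓ) := by
        apply mul_le_mul (hMb ℓ) (exp_est (by linarith) (by linarith) ℓ) (by positivity) hM0
    _ = M * Real.exp (2 * π * |κ|) * Real.exp (-(π / 2)) ^ ℓ := by ring

private lemma hasDerivAt_tau (θ : ℝ) :
    HasDerivAt (fun θ : ℝ => Complex.exp (θ * Complex.I))
      (Complex.I * Complex.exp (θ * Complex.I)) θ := by
  have h1 : HasDerivAt (fun z : ℂ => Complex.exp (z * Complex.I))
      (Complex.exp ((θ : ℂ) * Complex.I) * Complex.I) (θ : ℂ) := by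
    simpa using ((hasDerivAt_id ((θ : ℝ) : ℂ)).mul_const Complex.I).cexp
  simpa [mul_comm] using h1.comp_ofReal

private lemma exp_arc_endpoints :
    Complex.exp (((2 * π / 3 : ℝ) : ℂ) * Complex.I)
      = Complex.exp (((π / 3 : ℝ) : ℂ) * Complex.I) - 1 := by
  have e1 : Complex.exp (((π / 3 : ℝ) : ℂ) * Complex.I)
      = (Real.cos (π / 3) : ℂ) + (Real.sin (π / 3) : ℂ) * Complex.I := by
    rw [Complex.exp_mul_I, Complex.ofReal_cos, Complex.ofReal_sin]
  have e2 : Complex.exp (((2 * π / 3 : ℝ) : ℂ) * Complex.I)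
      = (Real.cos (2 * π / 3) : ℂ) + (Real.sin (2 * π / 3) : ℂ) * Complex.I := by
    rw [Complex.exp_mul_I, Complex.ofReal_cos, Complex.ofReal_sin]
  have h3 : (2 * π / 3 : ℝ) = π - π / 3 := by ring
  rw [e1, e2, h3, Real.cos_pi_sub, Real.sin_pi_sub, Real.cos_pi_div_three]
  push_cast
  ring

private lemma arc_integral_exp (m : ℤ) :
    (∫ θ in (π / 3 : ℝ)..(2 * π / 3),
      Complex.exp (2 * π * Complex.I * (m : ℂ) * Complex.exp (θ * Complex.I))
        * (Complex.I * Complex.exp (θ * Complex.I)))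
      = if m = 0 then (-1 : ℂ) else 0 := by
  have hcont : Continuous fun θ : ℝ => Complex.exp (θ * Complex.I) :=
    Complex.continuous_exp.comp (Complex.continuous_ofReal.mul continuous_const)
  have hcont2 : Continuous fun θ : ℝ =>
      Complex.exp (2 * π * Complex.I * (m : ℂ) * Complex.exp (θ * Complex.I))
        * (Complex.I * Complex.exp (θ * Complex.I)) :=
    (Complex.continuous_exp.comp (continuous_const.mul hcont)).mul (continuous_const.mul hcont)
  by_cases hm : m = 0
  · subst hm
    simp only [Int.cast_zero, mul_zero, zero_mul, Complex.exp_zero, one_mul]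
    rw [intervalIntegral.integral_eq_sub_of_hasDerivAt (fun θ _ => hasDerivAt_tau θ)
      ((continuous_const.mul hcont).intervalIntegrable _ _)]
    rw [exp_arc_endpoints]
    norm_num
  · simp only [hm, if_false]
    set K : ℂ := 2 * π * Complex.I * (m : ℂ) with hK
    have hKne : K ≠ 0 := by
      rw [hK]
      apply mul_ne_zero
      apply mul_ne_zero
      · simp [Real.pi_ne_zero]
      · exact Complex.I_ne_zero
      · exact_mod_cast hm
    have hderiv : ∀ θ : ℝ, HasDerivAt (fun θ : ℝ => Complex.exp (K * Complex.exp (θ * Complex.I)) / K)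
        (Complex.exp (K * Complex.exp (θ * Complex.I)) * (Complex.I * Complex.exp (θ * Complex.I))) θ := by
      intro θ
      have h1 := (((hasDerivAt_tau θ).const_mul K).cexp).div_const K
      refine h1.congr_deriv ?_
      rw [div_eq_iff hKne]
      ring
    rw [intervalIntegral.integral_eq_sub_of_hasDerivAt (fun θ _ => hderiv θ)
      (hcont2.intervalIntegrable _ _)]
    rw [exp_arc_endpoints]
    have : K * (Complex.exp (((π / 3 : ℝ) : ℂ) * Complex.I) - 1)
        = K * Complex.exp (((π / 3 : ℝ) : ℂ) * Complex.I) + ((-m : ℤ) : ℂ) * (2 * π * Complex.I) := by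
      rw [hK]; push_cast; ring
    rw [this, Complex.exp_add, Complex.exp_int_mul_two_pi_mul_I, mul_one]
    ring

open MeasureTheory in
private lemma swap_sum_integral {ι : Type*} [Countable ι] {a b : ℝ} (hab : a ≤ b)
    {F : ι → ℝ → ℂ} {u : ι → ℝ} (hcont : ∀ i, Continuous (F i))
    (hu : Summable u) (hbound : ∀ i, ∀ θ ∈ Set.Ioc a b, ‖F i θ‖ ≤ u i) :
    HasSum (fun i => ∫ θ in a..b, F i θ) (∫ θ in a..b, ∑' i, F i θ) := by
  have hmeas : volume (Set.Ioc a b) < ⊤ := measure_Ioc_lt_top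
  have hint : ∀ i, IntegrableOn (F i) (Set.Ioc a b) := fun i => (hcont i).integrableOn_Ioc
  have hF_sum : Summable fun i => ∫ θ in Set.Ioc a b, ‖F i θ‖ := by
    apply Summable.of_nonneg_of_le
      (fun i => integral_nonneg fun θ => norm_nonneg _)
      (fun i => ?_) (hu.mul_right (b - a))
    have h1 : ‖∫ θ in Set.Ioc a b, ‖F i θ‖‖ ≤ u i * (volume (Set.Ioc a b)).toReal :=
      norm_setIntegral_le_of_norm_le_const hmeas fun x hx => by
        rw [norm_norm]; exact hbound i x hx
    rw [Real.volume_Ioc, ENNReal.toReal_ofReal (by linarith)] at h1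
    calc (∫ θ in Set.Ioc a b, ‖F i θ‖) ≤ ‖∫ θ in Set.Ioc a b, ‖F i θ‖‖ := le_abs_self _
      _ ≤ u i * (b - a) := h1
  have key := MeasureTheory.hasSum_integral_of_summable_integral_norm
    (μ := volume.restrict (Set.Ioc a b)) (F := F) hint hF_sum
  simpa only [intervalIntegral.integral_of_le hab] using key

set_option maxHeartbeats 1600000

/-- Rademacher-type formula via duality.  Let `1 ≤ r ≤ 24` and `n ≥ 1`.  Suppose
`P` is the Poincaré series `P_{2+r/2, −n+r/24}` in the sense that it has the Fourier
expansion `P(τ) = q^{−n+r/24} + Σ_{j≥n} c_j q^{j−n+r/24}` (so `c n` is the coefficient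
`c_{r/24}` of `q^{r/24}`), `E = η^{−r}` has the expansion
`E(τ) = q^{−r/24} Σ_{ℓ≥0} p_r(ℓ) q^ℓ`, both are holomorphic on the upper half-plane,
and the product `P·E` is an unrestricted weight-2 modular form with trivial multiplier
(it satisfies the weight-2 inversion law; periodicity follows from the expansions).
Then the constant term `p_r(n) + c_{r/24}` of `P·E` vanishes: `p_r(n) = −c_{r/24}`. -/
theorem rademacher_colored_partitions
    (r n : ℕ) (hr1 : 1 ≤ r) (hr24 : r ≤ 24) (hn : 1 ≤ n)
    (P E : ℂ → ℂ) (c : ℕ → ℂ)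
    (hPhol : DifferentiableOn ℂ P {τ : ℂ | 0 < τ.im})
    (hEhol : DifferentiableOn ℂ E {τ : ℂ | 0 < τ.im})
    (hP : ∀ τ : ℂ, 0 < τ.im →
      HasSum (fun j : ℕ =>
          c (n + j) * Complex.exp (2 * π * Complex.I * ((j : ℂ) + r / 24) * τ))
        (P τ - Complex.exp (2 * π * Complex.I * (-(n : ℂ) + r / 24) * τ)))
    (hE : ∀ τ : ℂ, 0 < τ.im →
      HasSum (fun ℓ : ℕ =>
          (colorPartitions r ℓ : ℂ) * Complex.exp (2 * π * Complex.I * ((ℓ : ℂ) - r / 24) * τ))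
        (E τ))
    (hmod : ∀ τ : ℂ, 0 < τ.im →
      P (-1 / τ) * E (-1 / τ) = τ ^ 2 * (P τ * E τ)) :
    (colorPartitions r n : ℂ) = -c n := by
  classical
  have hπ := Real.pi_pos
  set κE : ℝ := -(r : ℝ) / 24 with hκE
  set κP : ℝ := (r : ℝ) / 24 with hκP
  set κA : ℝ := -(n : ℝ) with hκA
  set pp : ℕ → ℂ := fun ℓ => (colorPartitions r ℓ : ℂ) with hpp
  set τf : ℝ → ℂ := fun θ => Complex.exp ((θ : ℂ) * Complex.I) with hτf
  set lead : ℂ → ℂ := fun z => Complex.exp (2 * π * Complex.I * (-(n : ℂ) + r / 24) * z)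
    with hlead
  set ET : ℕ → ℂ → ℂ := fun ℓ z =>
    pp ℓ * Complex.exp (2 * π * Complex.I * ((((ℓ : ℝ) + κE : ℝ)) : ℂ) * z) with hET
  set PT : ℕ → ℂ → ℂ := fun j z =>
    c (n + j) * Complex.exp (2 * π * Complex.I * ((((j : ℝ) + κP : ℝ)) : ℂ) * z) with hPT
  set AT : ℕ → ℂ → ℂ := fun ℓ z =>
    pp ℓ * Complex.exp (2 * π * Complex.I * ((((ℓ : ℝ) + κA : ℝ)) : ℂ) * z) with hAT
  have hab : (π / 3 : ℝ) ≤ 2 * π / 3 := by linarith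
  -- converted expansion hypotheses
  have hE' : ∀ z : ℂ, 0 < z.im → HasSum (fun ℓ => ET ℓ z) (E z) := by
    intro z hz
    have h := hE z hz
    have heq : (fun ℓ : ℕ => (colorPartitions r ℓ : ℂ)
        * Complex.exp (2 * π * Complex.I * ((ℓ : ℂ) - r / 24) * z)) = fun ℓ => ET ℓ z := by
      funext ℓ
      simp only [hET, hpp]
      congr 3
      rw [hκE]; push_cast; ring
    rwa [heq] at h
  have hP' : ∀ z : ℂ, 0 < z.im → HasSum (fun j => PT j z) (P z - lead z) := by
    intro z hz
    have h := hP z hz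
    have heq : (fun j : ℕ => c (n + j)
        * Complex.exp (2 * π * Complex.I * ((j : ℂ) + r / 24) * z)) = fun j => PT j z := by
      funext j
      simp only [hPT]
      congr 3
      rw [hκP]; push_cast; ring
    rwa [heq] at h
  have hATfact : ∀ (ℓ : ℕ) (z : ℂ), ET ℓ z * lead z = AT ℓ z := by
    intro ℓ z
    simp only [hET, hAT, hlead]
    rw [mul_assoc, ← Complex.exp_add]
    congr 2
    rw [hκE, hκA]; push_cast; ring
  -- arc geometry
  have hsin : ∀ θ : ℝ, θ ∈ Set.uIcc (π / 3) (2 * π / 3) →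
      1 / 2 ≤ (τf θ).im ∧ (τf θ).im ≤ 1 := by
    intro θ hθ
    rw [Set.uIcc_of_le hab] at hθ
    have him : (τf θ).im = Real.sin θ := by
      simp only [hτf]; exact Complex.exp_ofReal_mul_I_im θ
    rw [him]
    exact ⟨sin_arc hθ.1 hθ.2, Real.sin_le_one θ⟩
  have hτH : ∀ θ ∈ Set.uIcc (π / 3) (2 * π / 3), 0 < (τf θ).im := fun θ hθ =>
    lt_of_lt_of_le (by norm_num) (hsin θ hθ).1
  have hIocsub : Set.Ioc (π / 3) (2 * π / 3) ⊆ Set.uIcc (π / 3) (2 * π / 3) := by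
    rw [Set.uIcc_of_le hab]; exact Set.Ioc_subset_Icc_self
  have hτcont : Continuous τf := by
    rw [hτf]; exact Complex.continuous_exp.comp (Complex.continuous_ofReal.mul continuous_const)
  have hτnorm : ∀ θ : ℝ, ‖Complex.I * τf θ‖ = 1 := by
    intro θ
    simp only [hτf]
    rw [norm_mul, Complex.norm_I,
      Complex.norm_exp_ofReal_mul_I, one_mul]
  -- summability at I/4 and geometric bounds
  have him4 : (Complex.I / 4).im = 1 / 4 := by simp
  have h4 : 0 < (Complex.I / 4).im := by rw [him4]; norm_num
  have hsumE4 : Summable (fun ℓ => ET ℓ (Complex.I / 4)) := (hE' _ h4).summable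
  have hsumP4 : Summable (fun j => PT j (Complex.I / 4)) := (hP' _ h4).summable
  have hsumA4 : Summable (fun ℓ => AT ℓ (Complex.I / 4)) := by
    have h := hsumE4.mul_right (lead (Complex.I / 4))
    have heq : (fun ℓ => ET ℓ (Complex.I / 4) * lead (Complex.I / 4))
        = fun ℓ => AT ℓ (Complex.I / 4) := funext fun ℓ => hATfact ℓ _
    rwa [heq] at h
  rw [hET] at hsumE4
  rw [hPT] at hsumP4
  rw [hAT] at hsumA4
  obtain ⟨CE, hCE0, hCE⟩ := series_geo_bound hsumE4
  obtain ⟨CP, hCP0, hCP⟩ := series_geo_bound hsumP4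
  obtain ⟨CA, hCA0, hCA⟩ := series_geo_bound hsumA4
  set ρ : ℝ := Real.exp (-(π / 2)) with hρ
  have hρ0 : 0 ≤ ρ := by rw [hρ]; exact Real.exp_nonneg _
  have hρ1 : ρ < 1 := by rw [hρ]; exact Real.exp_lt_one_iff.mpr (by linarith)
  have hgeo : Summable (fun ℓ : ℕ => ρ ^ ℓ) := summable_geometric_of_lt_one hρ0 hρ1
  -- families on the arc
  set FA : ℕ → ℝ → ℂ := fun ℓ θ => AT ℓ (τf θ) * (Complex.I * τf θ) with hFA
  set FB : ℕ × ℕ → ℝ → ℂ :=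
    fun x θ => PT x.1 (τf θ) * ET x.2 (τf θ) * (Complex.I * τf θ) with hFB
  clear_value κE κP κA pp τf lead ET PT AT ρ FA FB
  have hcontA : ∀ ℓ, Continuous (FA ℓ) := by
    intro ℓ
    simp only [hFA, hAT]
    exact (continuous_const.mul (Complex.continuous_exp.comp
      (continuous_const.mul hτcont))).mul (continuous_const.mul hτcont)
  have hcontB : ∀ x : ℕ × ℕ, Continuous (FB x) := by
    intro x
    simp only [hFB, hPT, hET]
    exact ((continuous_const.mul (Complex.continuous_exp.comp
      (continuous_const.mul hτcont))).mul
      (continuous_const.mul (Complex.continuous_exp.comp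
      (continuous_const.mul hτcont)))).mul (continuous_const.mul hτcont)
  have hboundA : ∀ ℓ, ∀ θ ∈ Set.Ioc (π / 3) (2 * π / 3), ‖FA ℓ θ‖ ≤ CA * ρ ^ ℓ := by
    intro ℓ θ hθ
    obtain ⟨h1, h2⟩ := hsin θ (hIocsub hθ)
    simp only [hFA]
    rw [norm_mul, hτnorm θ, mul_one]
    simp only [hAT]
    exact hCA ℓ (τf θ) h1 h2
  have hboundB : ∀ x : ℕ × ℕ, ∀ θ ∈ Set.Ioc (π / 3) (2 * π / 3),
      ‖FB x θ‖ ≤ (CP * ρ ^ x.1) * (CE * ρ ^ x.2) := by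
    intro x θ hθ
    obtain ⟨h1, h2⟩ := hsin θ (hIocsub hθ)
    simp only [hFB]
    rw [norm_mul, norm_mul, hτnorm θ, mul_one]
    have b1 : ‖PT x.1 (τf θ)‖ ≤ CP * ρ ^ x.1 := by
      simp only [hPT]; exact hCP x.1 (τf θ) h1 h2
    have b2 : ‖ET x.2 (τf θ)‖ ≤ CE * ρ ^ x.2 := by
      simp only [hET]; exact hCE x.2 (τf θ) h1 h2
    exact mul_le_mul b1 b2 (norm_nonneg _) (by positivity)
  -- swap sum and integral
  have swapA := swap_sum_integral hab hcontA (hgeo.mul_left CA) hboundA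
  have swapB := swap_sum_integral hab hcontB
    (Summable.mul_of_nonneg (hgeo.mul_left CP) (hgeo.mul_left CE)
      (fun i => by positivity) (fun j => by positivity)) hboundB
  -- pointwise identification of the sums
  have hptA : Set.EqOn (fun θ => ∑' ℓ, FA ℓ θ)
      (fun θ => lead (τf θ) * E (τf θ) * (Complex.I * τf θ))
      (Set.uIcc (π / 3) (2 * π / 3)) := by
    intro θ hθ
    have hz := hτH θ hθ
    have hs := (hE' (τf θ) hz).mul_right (lead (τf θ) * (Complex.I * τf θ))
    have heq : (fun ℓ => ET ℓ (τf θ) * (lead (τf θ) * (Complex.I * τf θ)))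
        = fun ℓ => FA ℓ θ := by
      funext ℓ
      simp only [hFA]
      rw [← hATfact ℓ (τf θ)]
      ring
    rw [heq] at hs
    simp only
    rw [hs.tsum_eq]
    ring
  have hptB : Set.EqOn (fun θ => ∑' x : ℕ × ℕ, FB x θ)
      (fun θ => (P (τf θ) - lead (τf θ)) * E (τf θ) * (Complex.I * τf θ))
      (Set.uIcc (π / 3) (2 * π / 3)) := by
    intro θ hθ
    have hz := hτH θ hθ
    obtain ⟨h1, h2⟩ := hsin θ hθ
    have hsn1 : Summable (fun j => ‖PT j (τf θ)‖) := by
      apply Summable.of_nonneg_of_le (fun _ => norm_nonneg _) _ (hgeo.mul_left CP)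
      intro j
      simp only [hPT]
      exact hCP j (τf θ) h1 h2
    have hsn2 : Summable (fun ℓ => ‖ET ℓ (τf θ)‖) := by
      apply Summable.of_nonneg_of_le (fun _ => norm_nonneg _) _ (hgeo.mul_left CE)
      intro ℓ
      simp only [hET]
      exact hCE ℓ (τf θ) h1 h2
    have heq : (fun x : ℕ × ℕ => FB x θ)
        = fun x : ℕ × ℕ => PT x.1 (τf θ) * ET x.2 (τf θ) * (Complex.I * τf θ) := by
      funext x
      simp only [hFB]
    simp only
    rw [heq, tsum_mul_right,
      ← tsum_mul_tsum_of_summable_norm hsn1 hsn2,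
      (hP' (τf θ) hz).tsum_eq, (hE' (τf θ) hz).tsum_eq]
  -- term-by-term integrals, A family
  have hintA : ∀ ℓ, (∫ θ in (π / 3 : ℝ)..(2 * π / 3), FA ℓ θ)
      = if ℓ = n then -(pp n) else 0 := by
    intro ℓ
    have heq : (fun θ => FA ℓ θ) = fun θ : ℝ => pp ℓ *
        (Complex.exp (2 * π * Complex.I * ((((ℓ : ℤ) - (n : ℤ) : ℤ)) : ℂ)
          * Complex.exp ((θ : ℂ) * Complex.I))
          * (Complex.I * Complex.exp ((θ : ℂ) * Complex.I))) := by
      funext θ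
      simp only [hFA, hAT, hτf]
      rw [show ((((ℓ : ℝ) + κA : ℝ)) : ℂ) = (((ℓ : ℤ) - (n : ℤ) : ℤ) : ℂ) by
        rw [hκA]; push_cast; ring]
      ring
    rw [heq, intervalIntegral.integral_const_mul, arc_integral_exp ((ℓ : ℤ) - (n : ℤ))]
    by_cases h : ℓ = n
    · subst h; simp
    · have hne : ((ℓ : ℤ) - (n : ℤ)) ≠ 0 := by
        intro hc
        exact h (by omega)
      simp [h, hne]
  -- term-by-term integrals, B family
  have hp0 : pp 0 = 1 := by
    simp only [hpp]
    have : colorPartitions r 0 = 1 := colorPartitions_zero' r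
    rw [this]
    norm_num
  have hintB : ∀ x : ℕ × ℕ, (∫ θ in (π / 3 : ℝ)..(2 * π / 3), FB x θ)
      = if x = ((0, 0) : ℕ × ℕ) then -(c n) else 0 := by
    intro x
    have heq : (fun θ => FB x θ) = fun θ : ℝ => (c (n + x.1) * pp x.2) *
        (Complex.exp (2 * π * Complex.I * ((((x.1 : ℤ) + (x.2 : ℤ) : ℤ)) : ℂ)
          * Complex.exp ((θ : ℂ) * Complex.I))
          * (Complex.I * Complex.exp ((θ : ℂ) * Complex.I))) := by
      funext θ
      simp only [hFB, hPT, hET, hτf]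
      have hcomb : Complex.exp (2 * π * Complex.I * ((((x.1 : ℝ) + κP : ℝ)) : ℂ)
            * Complex.exp ((θ : ℂ) * Complex.I))
          * Complex.exp (2 * π * Complex.I * ((((x.2 : ℝ) + κE : ℝ)) : ℂ)
            * Complex.exp ((θ : ℂ) * Complex.I))
          = Complex.exp (2 * π * Complex.I * ((((x.1 : ℤ) + (x.2 : ℤ) : ℤ)) : ℂ)
            * Complex.exp ((θ : ℂ) * Complex.I)) := by
        rw [← Complex.exp_add]
        congr 1
        rw [hκP, hκE]; push_cast; ring
      calc c (n + x.1) * Complex.exp (2 * π * Complex.I * ((((x.1 : ℝ) + κP : ℝ)) : ℂ)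
            * Complex.exp ((θ : ℂ) * Complex.I))
          * (pp x.2 * Complex.exp (2 * π * Complex.I * ((((x.2 : ℝ) + κE : ℝ)) : ℂ)
            * Complex.exp ((θ : ℂ) * Complex.I)))
          * (Complex.I * Complex.exp ((θ : ℂ) * Complex.I))
          = (c (n + x.1) * pp x.2) *
            ((Complex.exp (2 * π * Complex.I * ((((x.1 : ℝ) + κP : ℝ)) : ℂ)
              * Complex.exp ((θ : ℂ) * Complex.I))
            * Complex.exp (2 * π * Complex.I * ((((x.2 : ℝ) + κE : ℝ)) : ℂ)
              * Complex.exp ((θ : ℂ) * Complex.I)))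
            * (Complex.I * Complex.exp ((θ : ℂ) * Complex.I))) := by ring
        _ = _ := by rw [hcomb]
    rw [heq, intervalIntegral.integral_const_mul,
      arc_integral_exp ((x.1 : ℤ) + (x.2 : ℤ))]
    by_cases h : x = ((0, 0) : ℕ × ℕ)
    · subst h
      simp [hp0]
    · have hne : ((x.1 : ℤ) + (x.2 : ℤ)) ≠ 0 := by
        intro hc
        apply h
        have h1 : x.1 = 0 := by omega
        have h2 : x.2 = 0 := by omega
        exact Prod.ext h1 h2
      have hx0 : x ≠ 0 := by
        rw [show ((0 : ℕ × ℕ)) = ((0, 0) : ℕ × ℕ) from rfl]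
        exact h
      simp [hx0, hne, h]
  -- conclude the two integrals
  have hfinA : (∫ θ in (π / 3 : ℝ)..(2 * π / 3),
      lead (τf θ) * E (τf θ) * (Complex.I * τf θ)) = -(pp n) := by
    have h1 := swapA
    rw [intervalIntegral.integral_congr hptA] at h1
    rw [funext hintA] at h1
    exact h1.unique (hasSum_ite_eq n (-(pp n)))
  have hfinB : (∫ θ in (π / 3 : ℝ)..(2 * π / 3),
      (P (τf θ) - lead (τf θ)) * E (τf θ) * (Complex.I * τf θ)) = -(c n) := by
    have h1 := swapB
    rw [intervalIntegral.integral_congr hptB] at h1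
    rw [funext hintB] at h1
    exact h1.unique (hasSum_ite_eq ((0, 0) : ℕ × ℕ) (-(c n)))
  -- the full integral vanishes by modularity
  have hflip : ∀ θ : ℝ, τf (π - θ) = -1 / τf θ := by
    intro θ
    simp only [hτf]
    push_cast
    rw [sub_mul, Complex.exp_sub, Complex.exp_pi_mul_I]
  have hgf : ∀ θ ∈ Set.uIcc (π / 3) (2 * π / 3),
      P (τf (π - θ)) * E (τf (π - θ)) * (Complex.I * τf (π - θ))
        = -(P (τf θ) * E (τf θ) * (Complex.I * τf θ)) := by
    intro θ hθ
    have hz := hτH θ hθ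
    have hne : τf θ ≠ 0 := by simp only [hτf]; exact Complex.exp_ne_zero _
    rw [hflip, hmod (τf θ) hz]
    field_simp
  have hI0 : (∫ θ in (π / 3 : ℝ)..(2 * π / 3),
      P (τf θ) * E (τf θ) * (Complex.I * τf θ)) = 0 := by
    have hcs := intervalIntegral.integral_comp_sub_left
      (a := π / 3) (b := 2 * π / 3)
      (fun θ => P (τf θ) * E (τf θ) * (Complex.I * τf θ)) π
    rw [show π - 2 * π / 3 = π / 3 by ring, show π - π / 3 = 2 * π / 3 by ring] at hcs
    have h2 : (∫ θ in (π / 3 : ℝ)..(2 * π / 3),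
        P (τf (π - θ)) * E (τf (π - θ)) * (Complex.I * τf (π - θ)))
        = ∫ θ in (π / 3 : ℝ)..(2 * π / 3),
          -(P (τf θ) * E (τf θ) * (Complex.I * τf θ)) :=
      intervalIntegral.integral_congr fun θ hθ => hgf θ hθ
    rw [intervalIntegral.integral_neg] at h2
    have h3 := hcs.symm.trans h2
    linear_combination h3 / 2
  -- split the integral
  have hEcont : ContinuousOn (fun θ => E (τf θ)) (Set.uIcc (π / 3) (2 * π / 3)) :=
    hEhol.continuousOn.comp hτcont.continuousOn fun θ hθ => hτH θ hθ
  have hPcont : ContinuousOn (fun θ => P (τf θ)) (Set.uIcc (π / 3) (2 * π / 3)) :=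
    hPhol.continuousOn.comp hτcont.continuousOn fun θ hθ => hτH θ hθ
  have hleadc : Continuous fun θ => lead (τf θ) := by
    simp only [hlead]
    exact Complex.continuous_exp.comp (continuous_const.mul hτcont)
  have hiτc : Continuous fun θ : ℝ => Complex.I * τf θ := continuous_const.mul hτcont
  have hgAint : IntervalIntegrable
      (fun θ => lead (τf θ) * E (τf θ) * (Complex.I * τf θ)) MeasureTheory.volume
      (π / 3) (2 * π / 3) :=
    ((hleadc.continuousOn.mul hEcont).mul hiτc.continuousOn).intervalIntegrable
  have hgBint : IntervalIntegrable
      (fun θ => (P (τf θ) - lead (τf θ)) * E (τf θ) * (Complex.I * τf θ))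
      MeasureTheory.volume (π / 3) (2 * π / 3) :=
    (((hPcont.sub hleadc.continuousOn).mul hEcont).mul hiτc.continuousOn).intervalIntegrable
  have hsplit : (∫ θ in (π / 3 : ℝ)..(2 * π / 3),
      P (τf θ) * E (τf θ) * (Complex.I * τf θ))
      = (∫ θ in (π / 3 : ℝ)..(2 * π / 3),
          lead (τf θ) * E (τf θ) * (Complex.I * τf θ))
        + ∫ θ in (π / 3 : ℝ)..(2 * π / 3),
          (P (τf θ) - lead (τf θ)) * E (τf θ) * (Complex.I * τf θ) := by
    rw [← intervalIntegral.integral_add hgAint hgBint]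
    apply intervalIntegral.integral_congr
    intro θ hθ
    simp only
    ring
  have hfinal : (0 : ℂ) = -(pp n) + -(c n) := by
    rw [← hI0, hsplit, hfinA, hfinB]
  have hgoal : pp n = -c n := by linear_combination hfinal
  simpa only [hpp] using hgoal
end
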